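/- arXiv:math/0209341 — 4 statements merged into one kernel-verified Lean document; each statement's English description precedes it below -/
import Mathlib

section
/- Let E be a finite-dimensional complex vector space, and consider the scalar action of ℂ^× = ℂ \ {0} on E \ {0}. Let S ⊆ E \ {0} be invariant under multiplication by all of ℂ^×, and let U ⊆ E \ {0} be an open set invariant under multiplication by all positive reals, with S ⊆ U. Then there exists an open set V ⊆ E \ {0}, invariant under multiplication by ℂ^×, with S ⊆ V ⊆ U. -/
/-- In a finite-dimensional complex vector space `E`, any `ℂˣ`-invariant
subset `S` of `E \ {0}` contained in an `ℝ>0`-invariant open subset `U` of `E \ {0}`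
admits a `ℂˣ`-invariant open neighborhood `V` with `S ⊆ V ⊆ U`. -/
theorem stmt_1 {E : Type*} [NormedAddCommGroup E] [NormedSpace ℂ E] [FiniteDimensional ℂ E]
    (S U : Set E) (hS0 : S ⊆ {x : E | x ≠ 0}) (hU0 : U ⊆ {x : E | x ≠ 0})
    (hSinv : ∀ (c : ℂ), c ≠ 0 → ∀ x ∈ S, c • x ∈ S)
    (hUopen : IsOpen U)
    (hUinv : ∀ (r : ℝ), 0 < r → ∀ x ∈ U, (r : ℂ) • x ∈ U)
    (hSU : S ⊆ U) :
    ∃ V : Set E, IsOpen V ∧ V ⊆ {x : E | x ≠ 0} ∧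
      (∀ (c : ℂ), c ≠ 0 → ∀ x ∈ V, c • x ∈ V) ∧ S ⊆ V ∧ V ⊆ U := by
  set V : Set E := {x : E | ∀ c : ℂ, ‖c‖ = 1 → c • x ∈ U} with hV
  have hVU : V ⊆ U := by
    intro x hx
    have := hx (1 : ℂ) (by simp)
    simpa using this
  refine ⟨V, ?_, hVU.trans hU0, ?_, ?_, hVU⟩
  · -- openness
    rw [isOpen_iff_mem_nhds]
    intro x hx
    have hK : IsCompact (Metric.sphere (0 : ℂ) 1) := isCompact_sphere 0 1
    have h := hK.eventually_forall_of_forall_eventually (x₀ := x)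
      (P := fun (y : E) (c : ℂ) => c • y ∈ U) ?_
    · filter_upwards [h] with y hy c hc
      exact hy c (by simpa using hc)
    · intro c hc
      have hcont : Continuous fun z : E × ℂ => z.2 • z.1 :=
        continuous_snd.smul continuous_fst
      have : c • x ∈ U := hx c (by simpa using hc)
      have := hUopen.mem_nhds this
      have := hcont.continuousAt (x := (x, c)) (this)
      filter_upwards [this] with z hz using hz
  · -- ℂˣ-invariance
    intro c hc x hx d hd
    have hcn : (0 : ℝ) < ‖c‖ := norm_pos_iff.mpr hc
    have hdc : d * c ≠ 0 := mul_ne_zero (by intro h; rw [h] at hd; simp at hd) hc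
    have hu : ‖d * c / (‖c‖ : ℂ)‖ = 1 := by
      rw [norm_div, norm_mul, hd]
      simp [hcn.ne']
    have hmem : (d * c / (‖c‖ : ℂ)) • x ∈ U := hx _ hu
    have := hUinv ‖c‖ hcn _ hmem
    rw [← smul_assoc] at this
    have heq : ((‖c‖ : ℂ) • (d * c / (‖c‖ : ℂ))) = d * c := by
      field_simp
      have hc' : (‖c‖ : ℂ) ≠ 0 := by exact_mod_cast hcn.ne'
      rw [smul_eq_mul]
      field_simp
    rw [heq] at this
    rwa [smul_smul]
  · -- S ⊆ V
    intro x hx c hc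
    exact hSU (hSinv c (by intro h; rw [h] at hc; simp at hc) x hx)
end

section
/- Let D be a triangulated category equipped with a t-structure (D^{≤0}, D^{≥0}) with heart C = D^{≤0} ∩ D^{≥0}. Let f : X → Y be a morphism in C and complete it to a distinguished triangle X → Y → Z → X[1] in D. Then the truncation τ^{≤-1}(Z)[-1] lies in C and is a kernel of f in the abelian category C, and τ^{≥0}(Z) lies in C and is a cokernel of f in C. -/
open CategoryTheory Limits Pretriangulated Triangulated

open CategoryTheory.Category

section Stmt5Aux

variable {D : Type*} [Category D] [Preadditive D] [HasZeroObject D] [HasShift D ℤ]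
  [∀ n : ℤ, (shiftFunctor D n).Additive] [Pretriangulated D]

private lemma stmt5_zero_of (t : TStructure D) {a b : ℤ} (hab : a < b) {P Q : D}
    (hP : t.le a P) (hQ : t.ge b Q) (φ : P ⟶ Q) : φ = 0 := by
  have h1 : t.le 0 (P⟦a⟧) := t.le_shift a a 0 (add_zero a) P hP
  have h2 : t.ge (b - a) (Q⟦a⟧) := t.ge_shift b a (b - a) (by omega) Q hQ
  have h3 : t.ge 1 (Q⟦a⟧) := t.ge_antitone (by omega) _ h2
  have h4 := t.zero' ((shiftFunctor D a).map φ) h1 h3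
  apply (shiftFunctor D a).map_injective
  rw [h4, Functor.map_zero]

private lemma stmt5_ge_ext (t : TStructure D) (n : ℤ) (T : Triangle D) (hT : T ∈ distTriang D)
    (h₁ : t.ge n T.obj₁) (h₃ : t.ge n T.obj₃) : t.ge n T.obj₂ := by
  obtain ⟨L, G, hL, hG, i, p, δ, mem⟩ := t.exists_triangle T.obj₂ (n-1) n (by omega)
  have hi : i = 0 := by
    obtain ⟨j, hj⟩ := Triangle.coyoneda_exact₂ T hT i (stmt5_zero_of t (by omega) hL h₃ _)
    rw [hj, stmt5_zero_of t (by omega) hL h₁ j, zero_comp]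
  have hL0 : IsZero L := by
    obtain ⟨s, hs⟩ := Triangle.coyoneda_exact₂ _ (inv_rot_of_distTriang _ mem) (𝟙 L)
      (by simp [hi]; exact comp_zero)
    rw [IsZero.iff_id_eq_zero, hs, stmt5_zero_of t (show n-1 < n+1 by omega) hL
      (t.ge_shift n (-1) (n+1) (by omega) G hG) s]; exact zero_comp
  have : IsIso p := (Triangle.isZero₁_iff_isIso₂ _ mem).1 hL0
  exact (t.ge n).prop_of_iso (asIso p).symm hG

private lemma stmt5_le_ext (t : TStructure D) (n : ℤ) (T : Triangle D) (hT : T ∈ distTriang D)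
    (h₁ : t.le n T.obj₁) (h₃ : t.le n T.obj₃) : t.le n T.obj₂ := by
  obtain ⟨L, G, hL, hG, i, p, δ, mem⟩ := t.exists_triangle T.obj₂ n (n+1) rfl
  have hp : p = 0 := by
    obtain ⟨q, hq⟩ := Triangle.yoneda_exact₂ T hT p (stmt5_zero_of t (by omega) h₁ hG _)
    rw [hq, stmt5_zero_of t (by omega) h₃ hG q, comp_zero]
  have hG0 : IsZero G := by
    obtain ⟨s, hs⟩ := Triangle.yoneda_exact₃ _ mem (𝟙 G) (by simp [hp]; exact zero_comp)
    rw [IsZero.iff_id_eq_zero, hs, stmt5_zero_of t (show n-1 < n+1 by omega)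
      (t.le_shift n 1 (n-1) (by omega) L hL) hG s]; exact comp_zero
  have : IsIso i := (Triangle.isZero₃_iff_isIso₁ _ mem).1 hG0
  exact (t.le n).prop_of_iso (asIso i) hL

end Stmt5Aux


/-- Let `t` be a t-structure on a triangulated category `D` with heart
`C = D^{≤0} ∩ D^{≥0}` (encoded by the predicates `t.le 0` and `t.ge 0`).  Let
`f : X ⟶ Y` be a morphism in the heart, embedded in a distinguished triangle
`X ⟶ Y ⟶ Z ⟶ X⟦1⟧`.  If `A ⟶ Z ⟶ B ⟶ A⟦1⟧` is a (truncation) distinguished triangle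
with `A = τ^{≤ -1} Z` (i.e. `t.le (-1) A`) and `B = τ^{≥ 0} Z` (i.e. `t.ge 0 B`), then
`A⟦-1⟧` lies in the heart and the induced map `A⟦-1⟧ ⟶ X` is a kernel of `f` in the
heart, and `B` lies in the heart and the induced map `Y ⟶ B` is a cokernel of `f` in
the heart. -/
theorem stmt_5 {D : Type*} [Category D] [Preadditive D] [HasZeroObject D] [HasShift D ℤ]
    [∀ n : ℤ, (shiftFunctor D n).Additive] [Pretriangulated D]
    (t : TStructure D) (X Y Z : D)
    (hX : t.le 0 X ∧ t.ge 0 X) (hY : t.le 0 Y ∧ t.ge 0 Y)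
    (f : X ⟶ Y) (g : Y ⟶ Z) (h : Z ⟶ X⟦(1 : ℤ)⟧)
    (hT : Triangle.mk f g h ∈ distTriang D)
    (A B : D) (a : A ⟶ Z) (b : Z ⟶ B) (c : B ⟶ A⟦(1 : ℤ)⟧)
    (hA : t.le (-1) A) (hB : t.ge 0 B)
    (hT' : Triangle.mk a b c ∈ distTriang D) :
    -- the induced "kernel inclusion" `A⟦-1⟧ ⟶ X` obtained from `A ⟶ Z ⟶ X⟦1⟧` by shifting
    ∀ k : A⟦(-1 : ℤ)⟧ ⟶ X,
      k = a⟦(-1 : ℤ)⟧' ≫ h⟦(-1 : ℤ)⟧' ≫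
            (shiftFunctorCompIsoId D (1 : ℤ) (-1 : ℤ) (by omega)).hom.app X →
      -- `A⟦-1⟧` is in the heart and `k` is a kernel of `f` in the heart
      ((t.le 0 (A⟦(-1 : ℤ)⟧) ∧ t.ge 0 (A⟦(-1 : ℤ)⟧)) ∧
        k ≫ f = 0 ∧
        (∀ (W : D), t.le 0 W → t.ge 0 W → ∀ u : W ⟶ X, u ≫ f = 0 →
          ∃! v : W ⟶ A⟦(-1 : ℤ)⟧, v ≫ k = u)) ∧
      -- `B` is in the heart and `g ≫ b : Y ⟶ B` is a cokernel of `f` in the heart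
      ((t.le 0 B ∧ t.ge 0 B) ∧
        f ≫ (g ≫ b) = 0 ∧
        (∀ (W : D), t.le 0 W → t.ge 0 W → ∀ w : Y ⟶ W, f ≫ w = 0 →
          ∃! v : B ⟶ W, (g ≫ b) ≫ v = w)) := by
  intro k hk
  set δ : Z⟦(-1 : ℤ)⟧ ⟶ X :=
    h⟦(-1 : ℤ)⟧' ≫ (shiftFunctorCompIsoId D (1 : ℤ) (-1 : ℤ) (by omega)).hom.app X with hδdef
  have hk' : k = a⟦(-1 : ℤ)⟧' ≫ δ := hk
  -- the inverse rotation of the main triangle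
  have hTinv := inv_rot_of_distTriang _ hT
  have hmor₁ : (Triangle.mk f g h).invRotate.mor₁ = -δ := by
    simp [Triangle.invRotate, shiftEquiv, shiftEquiv', δ]
    rfl
  -- membership facts
  have hZge : t.ge (-1) Z := by
    refine stmt5_ge_ext t (-1) (Triangle.mk f g h).rotate (rot_of_distTriang _ hT) ?_ ?_
    · exact t.ge_antitone (by omega) _ hY.2
    · exact t.ge_shift 0 1 (-1) (by omega) X hX.2
  have hZle : t.le 0 Z := by
    refine stmt5_le_ext t 0 (Triangle.mk f g h).rotate (rot_of_distTriang _ hT) ?_ ?_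
    · exact hY.1
    · exact t.le_monotone (show (-1 : ℤ) ≤ 0 by omega) _ (t.le_shift 0 1 (-1) (by omega) X hX.1)
  have hAge : t.ge (-1) A := by
    refine stmt5_ge_ext t (-1) (Triangle.mk a b c).invRotate (inv_rot_of_distTriang _ hT') ?_ ?_
    · exact t.ge_antitone (by omega) _ (t.ge_shift 0 (-1) 1 (by omega) B hB)
    · exact hZge
  have hBle : t.le 0 B := by
    refine stmt5_le_ext t 0 (Triangle.mk a b c).rotate (rot_of_distTriang _ hT') ?_ ?_
    · exact hZle
    · exact t.le_monotone (show (-2 : ℤ) ≤ 0 by omega) _ (t.le_shift (-1) 1 (-2) (by omega) A hA)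
  have hKle : t.le 0 (A⟦(-1 : ℤ)⟧) := t.le_shift (-1) (-1) 0 (by omega) A hA
  have hKge : t.ge 0 (A⟦(-1 : ℤ)⟧) := t.ge_shift (-1) (-1) 0 (by omega) A hAge
  -- δ ≫ f = 0
  have hδf : δ ≫ f = 0 := by
    have h0 := comp_distTriang_mor_zero₁₂ _ hTinv
    rw [hmor₁] at h0
    have h1 : (Triangle.mk f g h).invRotate.mor₂ = f := rfl
    rw [h1] at h0
    exact neg_eq_zero.mp ((Preadditive.neg_comp δ f).symm.trans h0)
  -- the shifted truncation triangle
  have hTs := Triangle.shift_distinguished _ hT' (-1)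
  constructor
  · refine ⟨⟨hKle, hKge⟩, ?_, ?_⟩
    · rw [hk', Category.assoc, hδf, comp_zero]
    · intro W hW1 hW2 u hu
      -- uniqueness helper: any map to the kernel composing to zero is zero
      have uniq : ∀ v : W ⟶ A⟦(-1 : ℤ)⟧, v ≫ k = 0 → v = 0 := by
        intro v hv
        have hm0 : (v ≫ a⟦(-1 : ℤ)⟧') ≫ δ = 0 := by
          rw [Category.assoc, ← hk']; exact hv
        -- first: v ≫ a⟦-1⟧' = 0
        have hcomp : (v ≫ a⟦(-1 : ℤ)⟧') ≫ (Triangle.mk f g h).invRotate.mor₁ = 0 := by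
          rw [hmor₁]; exact (Preadditive.comp_neg _ δ).trans (neg_eq_zero.mpr hm0)
        obtain ⟨w, hw⟩ := Triangle.coyoneda_exact₂ _ (inv_rot_of_distTriang _ hTinv)
          (v ≫ a⟦(-1 : ℤ)⟧') hcomp
        have hw0 : w = 0 := stmt5_zero_of t (show (0:ℤ) < 1 by omega) hW1
          (t.ge_shift 0 (-1) 1 (by omega) Y hY.2) w
        have hva : v ≫ a⟦(-1 : ℤ)⟧' = 0 := hw.trans (by rw [hw0]; exact zero_comp)
        -- then factor v through B⟦-1⟧⟦-1⟧
        have hvmor : v ≫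
            ((CategoryTheory.shiftFunctor (Triangle D) (-1 : ℤ)).obj (Triangle.mk a b c)).mor₁
              = 0 := by
          have : ((CategoryTheory.shiftFunctor (Triangle D) (-1 : ℤ)).obj
              (Triangle.mk a b c)).mor₁ = (-1 : ℤ).negOnePow • a⟦(-1 : ℤ)⟧' := rfl
          rw [this]; exact (Linear.comp_units_smul v _ (a⟦(-1 : ℤ)⟧')).trans (by rw [hva]; exact smul_zero _)
        obtain ⟨w', hw'⟩ := Triangle.coyoneda_exact₂ _ (inv_rot_of_distTriang _ hTs) v hvmor
        have hw'0 : w' = 0 := stmt5_zero_of t (show (0:ℤ) < 2 by omega) hW1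
          (t.ge_shift 1 (-1) 2 (by omega) _ (t.ge_shift 0 (-1) 1 (by omega) B hB)) w'
        rw [hw', hw'0]; exact zero_comp
      -- existence
      have hu2 : u ≫ (Triangle.mk f g h).invRotate.mor₂ = 0 := hu
      obtain ⟨u', hu'⟩ := Triangle.coyoneda_exact₂ _ hTinv u hu2
      have huδ : u = (-u') ≫ δ := by
        exact hu'.trans (by rw [hmor₁]; exact (Preadditive.comp_neg _ _).trans (Preadditive.neg_comp _ _).symm)
      have hub : (-u' : W ⟶ Z⟦(-1 : ℤ)⟧) ≫
          ((CategoryTheory.shiftFunctor (Triangle D) (-1 : ℤ)).obj (Triangle.mk a b c)).mor₂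
            = 0 :=
        stmt5_zero_of t (show (0:ℤ) < 1 by omega) hW1
          (t.ge_shift 0 (-1) 1 (by omega) B hB) _
      obtain ⟨v', hv'⟩ := Triangle.coyoneda_exact₂ _ hTs (-u') hub
      have hmorTs : ((CategoryTheory.shiftFunctor (Triangle D) (-1 : ℤ)).obj
          (Triangle.mk a b c)).mor₁ = (-1 : ℤ).negOnePow • a⟦(-1 : ℤ)⟧' := rfl
      rw [hmorTs] at hv'
      obtain ⟨vv, hvv⟩ : ∃ vv : W ⟶ A⟦(-1 : ℤ)⟧, vv ≫ a⟦(-1 : ℤ)⟧'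
          = (-u' : W ⟶ Z⟦(-1 : ℤ)⟧) :=
        ⟨(-1 : ℤ).negOnePow • v', by
          exact (Linear.units_smul_comp _ _ _).trans ((Linear.comp_units_smul _ _ _).symm.trans hv'.symm)⟩
      have hvvk : vv ≫ k = u := by
        rw [hk', ← Category.assoc, hvv]; exact huδ.symm
      refine ⟨vv, hvvk, ?_⟩
      intro y hy
      replace hy : y ≫ k = u := hy
      have h0 : (y - vv) ≫ k = 0 := by
        rw [Preadditive.sub_comp, hy, hvvk, sub_self]
      have h1 := uniq _ h0
      rwa [sub_eq_zero] at h1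
  · refine ⟨⟨hBle, hB⟩, ?_, ?_⟩
    · have h1 : f ≫ g = 0 := comp_distTriang_mor_zero₁₂ _ hT
      rw [← Category.assoc, h1, zero_comp]
    · intro W hW1 hW2 w hw
      have uniq : ∀ v : B ⟶ W, (g ≫ b) ≫ v = 0 → v = 0 := by
        intro v hv
        have hbv : g ≫ (b ≫ v) = 0 := by rw [← Category.assoc]; exact hv
        obtain ⟨s, hs⟩ := Triangle.yoneda_exact₃ _ hT (b ≫ v) hbv
        have hs0 : s = 0 := stmt5_zero_of t (show (-1:ℤ) < 0 by omega)
          (t.le_shift 0 1 (-1) (by omega) X hX.1) hW2 s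
        have hbv0 : b ≫ v = 0 := hs.trans (by rw [hs0]; exact comp_zero)
        obtain ⟨s', hs'⟩ := Triangle.yoneda_exact₃ _ hT' v hbv0
        have hs'0 : s' = 0 := stmt5_zero_of t (show (-2:ℤ) < 0 by omega)
          (t.le_shift (-1) 1 (-2) (by omega) A hA) hW2 s'
        rw [hs', hs'0]; exact comp_zero
      obtain ⟨w'0, hw'0⟩ := Triangle.yoneda_exact₂ _ hT w hw
      obtain ⟨w', hw'⟩ : ∃ w' : Z ⟶ W, w = g ≫ w' := ⟨w'0, hw'0⟩
      have haw : a ≫ w' = 0 := stmt5_zero_of t (show (-1:ℤ) < 0 by omega) hA hW2 _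
      obtain ⟨v0, hv0⟩ := Triangle.yoneda_exact₂ _ hT' w' haw
      obtain ⟨v, hv⟩ : ∃ v : B ⟶ W, w' = b ≫ v := ⟨v0, hv0⟩
      have hgbv : (g ≫ b) ≫ v = w := by
        rw [Category.assoc, ← hv, ← hw']
      refine ⟨v, hgbv, ?_⟩
      intro y hy
      replace hy : (g ≫ b) ≫ y = w := hy
      have h0 : (g ≫ b) ≫ (y - v) = 0 := by
        rw [Preadditive.comp_sub, hy, hgbv, sub_self]
      have h1 := uniq _ h0
      rwa [sub_eq_zero] at h1
end

section
/- Let T be an assignment of a triangulated category C(U) to each open subset U of a topological space X, with exact restriction functors i_{VU}^{-1} : C(U) → C(V) for V ⊆ U (compatible up to coherent natural isomorphism). Assume: (1) each restriction functor i_{VU}^{-1} admits a fully faithful exact left adjoint i_{VU!}; (2) base change holds: for opens U₁, U₂ ⊆ V with U₁₂ = U₁ ∩ U₂, one has i_{U₁₂,U₂!} ∘ i_{U₁₂,U₁}^{-1} ≅ i_{U₂,V}^{-1} ∘ i_{U₁,V!}. Let U = U₁ ∪ U₂, and suppose given objects A₁ ∈ C(U₁), A₂ ∈ C(U₂) and an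 isomorphism f₂₁ : A₁|_{U₁₂} ≅ A₂|_{U₁₂}. Then there exists an object A ∈ C(U) and isomorphisms f₁ : A|_{U₁} ≅ A₁, f₂ : A|_{U₂} ≅ A₂ such that f₂₁ ∘ f₁|_{U₁₂} = f₂|_{U₁₂}. -/
open CategoryTheory Limits Pretriangulated TopologicalSpace Opposite

universe w v u

section ConeLemma

variable {C : Type u} [Category.{v} C] [HasZeroObject C] [Preadditive C]
  [HasShift C ℤ] [∀ n : ℤ, (shiftFunctor C n).Additive] [Pretriangulated C]

lemma cone_lemma (T : Triangle C) (hT : T ∈ distTriang C)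
    {P Q : C} (b : T.obj₂ ≅ P ⊞ Q) (u : T.obj₁ ⟶ P) (v : T.obj₁ ⟶ Q)
    (hbu : T.mor₁ ≫ b.hom = biprod.lift u v) [IsIso v] :
    IsIso ((biprod.inl : P ⟶ P ⊞ Q) ≫ b.inv ≫ T.mor₂) := by
  set e : P ⊞ Q ⟶ P ⊞ Q := biprod.lift (biprod.fst - biprod.snd ≫ inv v ≫ u) biprod.snd with he
  have heiso : IsIso e := by
    refine ⟨biprod.lift (biprod.fst + biprod.snd ≫ inv v ≫ u) biprod.snd, ?_, ?_⟩ <;>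
      apply biprod.hom_ext <;>
      simp [e, Preadditive.sub_comp, Preadditive.add_comp]
  set m : P ⊞ Q ⟶ P ⊞ T.obj₁ := biprod.map (𝟙 P) (inv v) with hm
  have hmiso : IsIso m := by
    refine ⟨biprod.map (𝟙 P) v, ?_, ?_⟩ <;> apply biprod.hom_ext <;> simp [m]
  have hmodel : Triangle.mk (biprod.inr : T.obj₁ ⟶ P ⊞ T.obj₁) biprod.fst 0 ∈ distTriang C := by
    refine isomorphic_distinguished _ (binaryBiproductTriangle_distinguished T.obj₁ P :
      Triangle.mk biprod.inl biprod.snd 0 ∈ distTriang C) _ ?_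
    refine Triangle.isoMk _ _ (Iso.refl T.obj₁) (biprod.braiding _ _) (Iso.refl P)
      ?_ (by
        show (biprod.fst : P ⊞ T.obj₁ ⟶ P) ≫ 𝟙 P = (biprod.braiding P T.obj₁).hom ≫ biprod.snd
        simp) (by
        show (0 : P ⟶ (shiftFunctor C (1 : ℤ)).obj T.obj₁) ≫ (shiftFunctor C (1 : ℤ)).map (𝟙 T.obj₁)
          = 𝟙 P ≫ 0
        simp)
    · show (biprod.inr : T.obj₁ ⟶ P ⊞ T.obj₁) ≫ (biprod.braiding P T.obj₁).hom = 𝟙 T.obj₁ ≫ biprod.inl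
      apply biprod.hom_ext <;> simp
  have h1 : T.mor₁ ≫ b.hom ≫ e = biprod.lift 0 v := by
    rw [← Category.assoc, hbu]
    apply biprod.hom_ext <;> simp [e, Preadditive.comp_sub]
  have hcomm : T.mor₁ ≫ (b.hom ≫ e ≫ m) = 𝟙 T.obj₁ ≫ biprod.inr := by
    rw [← Category.assoc, ← Category.assoc, Category.assoc _ b.hom e, h1]
    apply biprod.hom_ext <;> simp [m]
  obtain ⟨c, hc₁, hc₂⟩ := complete_distinguished_triangle_morphism T
    (Triangle.mk (biprod.inr : T.obj₁ ⟶ P ⊞ T.obj₁) biprod.fst 0) hT hmodel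
    (𝟙 T.obj₁) (b.hom ≫ e ≫ m) hcomm
  let ψ : T ⟶ Triangle.mk (biprod.inr : T.obj₁ ⟶ P ⊞ T.obj₁) biprod.fst 0 :=
    { hom₁ := 𝟙 T.obj₁
      hom₂ := b.hom ≫ e ≫ m
      hom₃ := c
      comm₁ := hcomm
      comm₂ := hc₁
      comm₃ := hc₂ }
  have hψ₂ : IsIso ψ.hom₂ := by dsimp [ψ]; exact (inferInstance : IsIso (b.hom ≫ e ≫ m))
  have hciso : IsIso c := isIso₃_of_isIso₁₂ ψ hT hmodel (by dsimp [ψ]; exact IsIso.id _) hψ₂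
  have hkey : ((biprod.inl : P ⟶ P ⊞ Q) ≫ b.inv ≫ T.mor₂) ≫ c = 𝟙 P := by
    have h2 : T.mor₂ ≫ c = (b.hom ≫ e ≫ m) ≫ biprod.fst := hc₁
    rw [Category.assoc, Category.assoc, h2]
    show (biprod.inl : P ⟶ P ⊞ Q) ≫ b.inv ≫ (b.hom ≫ e ≫ m) ≫ (biprod.fst : P ⊞ T.obj₁ ⟶ P) = 𝟙 P
    simp [e, m, Preadditive.sub_comp]
  have : IsIso (((biprod.inl : P ⟶ P ⊞ Q) ≫ b.inv ≫ T.mor₂) ≫ c) := by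
    rw [hkey]; exact IsIso.id _
  exact IsIso.of_isIso_comp_right _ c

end ConeLemma

section AdjAux

variable {C : Type*} {D : Type*} {E : Type*} [Category C] [Category D] [Category E]

/-- Conjugation by a natural isomorphism preserves `IsIso` of images. -/
lemma isIso_map_of_natIso {F G : C ⥤ D} (e : F ≅ G) {X Y : C} (f : X ⟶ Y)
    (h : IsIso (F.map f)) : IsIso (G.map f) := by
  rw [← NatIso.naturality_1 e f]
  infer_instance

/-- Transpose computation for a composite left adjoint. -/
lemma adj_aux {LA : C ⥤ D} {RA : D ⥤ C} {LB : D ⥤ E} {RB : E ⥤ D} {LW : C ⥤ E} {RW : E ⥤ C}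
    (adjA : LA ⊣ RA) (adjB : LB ⊣ RB) (adjW : LW ⊣ RW) (heq : RB ⋙ RA = RW)
    {A₁ : D} (n : LA.obj (RA.obj A₁) ⟶ A₁) :
    adjW.homEquiv _ _
        ((adjW.leftAdjointUniq ((adjA.comp adjB).ofNatIsoRight (eqToIso heq))).hom.app (RA.obj A₁)
          ≫ LB.map n)
      = adjA.homEquiv _ _ n ≫ RA.map (adjB.unit.app A₁)
          ≫ eqToHom (Functor.congr_obj heq (LB.obj A₁)) := by
  rw [Adjunction.homEquiv_naturality_right,
    Adjunction.homEquiv_leftAdjointUniq_hom_app]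
  have hunit : ((adjA.comp adjB).ofNatIsoRight (eqToIso heq)).unit.app (RA.obj A₁)
      = (adjA.comp adjB).unit.app (RA.obj A₁)
        ≫ eqToHom (Functor.congr_obj heq ((LA ⋙ LB).obj (RA.obj A₁))) := by
    simp only [Adjunction.ofNatIsoRight, Adjunction.mkOfHomEquiv_unit_app,
      Adjunction.equivHomsetRightOfNatIso, Equiv.trans_apply, Equiv.coe_fn_mk,
      eqToIso.hom, eqToHom_app, Adjunction.homEquiv_unit, Functor.map_id,
      Category.comp_id]
    simp
  rw [hunit]
  have hconj : ∀ {P Q : E} (g : P ⟶ Q),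
      eqToHom (Functor.congr_obj heq P) ≫ RW.map g
        = (RB ⋙ RA).map g ≫ eqToHom (Functor.congr_obj heq Q) := by
    intro P Q g
    have := Functor.congr_hom heq g
    rw [this]
    simp
  rw [Category.assoc, hconj ((LB).map n)]
  rw [Adjunction.comp_unit_app]
  have hnat : adjB.unit.app (LA.obj (RA.obj A₁)) ≫ (RB).map ((LB).map n)
      = n ≫ adjB.unit.app A₁ := (adjB.unit.naturality n).symm
  have : RA.map (adjB.unit.app (LA.obj (RA.obj A₁))) ≫ (RB ⋙ RA).map (LB.map n)
      = RA.map (n ≫ adjB.unit.app A₁) := by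
    dsimp [Functor.comp_map]
    rw [← RA.map_comp, hnat]
  rw [Category.assoc, ← Category.assoc (RA.map _), this, RA.map_comp,
    Adjunction.homEquiv_unit]
  simp

end AdjAux

section Glue

variable {CW : Type*} {CU : Type*} {C₁ : Type*} {C₂ : Type*}
  [Category CW] [Category CU] [Category C₁] [Category C₂]
  [Preadditive CW]
  [HasZeroObject CU] [Preadditive CU] [HasShift CU ℤ]
  [∀ n : ℤ, (shiftFunctor CU n).Additive] [Pretriangulated CU]
  [HasZeroObject C₁] [Preadditive C₁] [HasShift C₁ ℤ]
  [∀ n : ℤ, (shiftFunctor C₁ n).Additive] [Pretriangulated C₁]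
  [HasZeroObject C₂] [Preadditive C₂] [HasShift C₂ ℤ]
  [∀ n : ℤ, (shiftFunctor C₂ n).Additive] [Pretriangulated C₂]

lemma glue_main
    (F₁ : CU ⥤ C₁) (F₂ : CU ⥤ C₂) (RW : CU ⥤ CW) (R₁ : C₁ ⥤ CW) (R₂ : C₂ ⥤ CW)
    (L1 : C₁ ⥤ CU) (L2 : C₂ ⥤ CU) (LW : CW ⥤ CU) (LA₁ : CW ⥤ C₁) (LA₂ : CW ⥤ C₂)
    [F₁.CommShift ℤ] [F₁.IsTriangulated] [F₂.CommShift ℤ] [F₂.IsTriangulated]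
    [RW.Additive] [R₂.Additive]
    (adj1 : L1 ⊣ F₁) (adj2 : L2 ⊣ F₂) (adjW : LW ⊣ RW)
    (adjA₁ : LA₁ ⊣ R₁) (adjA₂ : LA₂ ⊣ R₂)
    [L1.Full] [L1.Faithful] [L2.Full] [L2.Faithful]
    [LA₁.Full] [LA₁.Faithful] [LA₂.Full] [LA₂.Faithful]
    (hc₁ : F₁ ⋙ R₁ = RW) (hc₂ : F₂ ⋙ R₂ = RW)
    (hI1 : ∀ {P Q : C₁} (f : P ⟶ Q), IsIso (R₁.map f) → IsIso (F₂.map (L1.map f)))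
    (hI2 : ∀ {P Q : C₂} (f : P ⟶ Q), IsIso (R₂.map f) → IsIso (F₁.map (L2.map f)))
    (A₁ : C₁) (A₂ : C₂) (f21 : R₁.obj A₁ ≅ R₂.obj A₂) :
    ∃ (A : CU) (f1 : F₁.obj A ≅ A₁) (f2 : F₂.obj A ≅ A₂),
      eqToHom (Functor.congr_obj hc₁ A).symm ≫ R₁.map f1.hom ≫ f21.hom
        = eqToHom (Functor.congr_obj hc₂ A).symm ≫ R₂.map f2.hom := by
  classical
  haveI : PreservesBinaryBiproducts F₁ := preservesBinaryBiproducts_of_preservesBiproducts F₁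
  haveI : PreservesBinaryBiproducts F₂ := preservesBinaryBiproducts_of_preservesBiproducts F₂
  -- the comparison isomorphisms between left adjoints
  let adjC₁ := (adjA₁.comp adj1).ofNatIsoRight (eqToIso hc₁)
  let κ₁ := adjW.leftAdjointUniq adjC₁
  let adjC₂ := (adjA₂.comp adj2).ofNatIsoRight (eqToIso hc₂)
  let κ₂ := adjW.leftAdjointUniq adjC₂
  -- the gluing morphisms
  let n₁ : LA₁.obj (R₁.obj A₁) ⟶ A₁ := adjA₁.counit.app A₁
  let n₂ : LA₂.obj (R₂.obj A₂) ⟶ A₂ := -(adjA₂.counit.app A₂)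
  let φ₁ : LW.obj (R₁.obj A₁) ⟶ L1.obj A₁ := κ₁.hom.app (R₁.obj A₁) ≫ L1.map n₁
  let φ₂ : LW.obj (R₁.obj A₁) ⟶ L2.obj A₂ :=
    LW.map f21.hom ≫ κ₂.hom.app (R₂.obj A₂) ≫ L2.map n₂
  let φ : LW.obj (R₁.obj A₁) ⟶ L1.obj A₁ ⊞ L2.obj A₂ := biprod.lift φ₁ φ₂
  obtain ⟨A, ρ, θ, hΔ⟩ := Pretriangulated.distinguished_cocone_triangle φ
  let p₁ : L1.obj A₁ ⟶ A := biprod.inl ≫ ρ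
  let p₂ : L2.obj A₂ ⟶ A := biprod.inr ≫ ρ
  -- isomorphy of the two cross restrictions
  have hiso₂ : IsIso (F₁.map φ₂) := by
    have hn₂ : IsIso (R₂.map n₂) := by
      have : IsIso (R₂.map (adjA₂.counit.app A₂)) := inferInstance
      have hneg : R₂.map n₂ = -(R₂.map (adjA₂.counit.app A₂)) := by
        dsimp [n₂]; rw [R₂.map_neg]
      rw [hneg]
      exact ⟨-(inv (R₂.map (adjA₂.counit.app A₂))), by simp, by simp⟩
    have h2 : IsIso (F₁.map (L2.map n₂)) := hI2 n₂ hn₂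
    have : F₁.map φ₂ = F₁.map (LW.map f21.hom) ≫ F₁.map (κ₂.hom.app (R₂.obj A₂))
        ≫ F₁.map (L2.map n₂) := by
      dsimp [φ₂]; rw [F₁.map_comp, F₁.map_comp]
    rw [this]
    infer_instance
  have hiso₁ : IsIso (F₂.map φ₁) := by
    have hn₁ : IsIso (R₁.map n₁) := by dsimp [n₁]; infer_instance
    have h1 : IsIso (F₂.map (L1.map n₁)) := hI1 n₁ hn₁
    have : F₂.map φ₁ = F₂.map (κ₁.hom.app (R₁.obj A₁)) ≫ F₂.map (L1.map n₁) := by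
      dsimp [φ₁]; rw [F₂.map_comp]
    rw [this]
    infer_instance
  -- restriction of the triangle to U₁
  have hΔ₁ := F₁.map_distinguished _ hΔ
  let b₁ := F₁.mapBiprod (L1.obj A₁) (L2.obj A₂)
  have hbu₁ : (F₁.mapTriangle.obj (Triangle.mk φ ρ θ)).mor₁ ≫ b₁.hom
      = biprod.lift (F₁.map φ₁) (F₁.map φ₂) := by
    show F₁.map φ ≫ b₁.hom = biprod.lift (F₁.map φ₁) (F₁.map φ₂)
    apply biprod.hom_ext
    · rw [Functor.mapBiprod_hom, Category.assoc, biprod.lift_fst, ← F₁.map_comp, biprod.lift_fst, biprod.lift_fst]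
    · rw [Functor.mapBiprod_hom, Category.assoc, biprod.lift_snd, ← F₁.map_comp, biprod.lift_snd, biprod.lift_snd]
  have hp₁ : IsIso (F₁.map p₁) := by
    haveI := hiso₂
    have := @cone_lemma _ _ _ _ _ _ _ _ hΔ₁ _ _ b₁ (F₁.map φ₁) (F₁.map φ₂) hbu₁ hiso₂
    have heq : (biprod.inl : F₁.obj (L1.obj A₁) ⟶ _) ≫ b₁.inv
        ≫ (F₁.mapTriangle.obj (Triangle.mk φ ρ θ)).mor₂ = F₁.map p₁ := by
      show (biprod.inl : F₁.obj (L1.obj A₁) ⟶ _) ≫ b₁.inv ≫ F₁.map ρ = F₁.map p₁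
      dsimp [p₁]
      rw [Functor.mapBiprod_inv, F₁.map_comp]
      simp
    exact (congrArg (fun g => IsIso g) heq).mp this
  -- restriction of the triangle to U₂
  have hΔ₂ := F₂.map_distinguished _ hΔ
  let b₂ := F₂.mapBiprod (L1.obj A₁) (L2.obj A₂) ≪≫
    biprod.braiding (F₂.obj (L1.obj A₁)) (F₂.obj (L2.obj A₂))
  have hbu₂ : (F₂.mapTriangle.obj (Triangle.mk φ ρ θ)).mor₁ ≫ b₂.hom
      = biprod.lift (F₂.map φ₂) (F₂.map φ₁) := by
    show F₂.map φ ≫ ((F₂.mapBiprod (L1.obj A₁) (L2.obj A₂)).hom ≫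
      (biprod.braiding (F₂.obj (L1.obj A₁)) (F₂.obj (L2.obj A₂))).hom) = biprod.lift (F₂.map φ₂) (F₂.map φ₁)
    apply biprod.hom_ext
    · rw [Functor.mapBiprod_hom, biprod.braiding_hom, Category.assoc, Category.assoc, biprod.lift_fst,
        biprod.lift_snd, ← F₂.map_comp, biprod.lift_snd, biprod.lift_fst]
    · rw [Functor.mapBiprod_hom, biprod.braiding_hom, Category.assoc, Category.assoc, biprod.lift_snd,
        biprod.lift_fst, ← F₂.map_comp, biprod.lift_fst, biprod.lift_snd]
  have hp₂ : IsIso (F₂.map p₂) := by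
    haveI := hiso₁
    have := @cone_lemma _ _ _ _ _ _ _ _ hΔ₂ _ _ b₂ (F₂.map φ₂) (F₂.map φ₁) hbu₂ hiso₁
    have heq : (biprod.inl : F₂.obj (L2.obj A₂) ⟶ _) ≫ b₂.inv
        ≫ (F₂.mapTriangle.obj (Triangle.mk φ ρ θ)).mor₂ = F₂.map p₂ := by
      have hbr : (biprod.inl : F₂.obj (L2.obj A₂) ⟶ _)
          ≫ (biprod.braiding (F₂.obj (L1.obj A₁)) (F₂.obj (L2.obj A₂))).inv
          = biprod.inr := by
        apply biprod.hom_ext <;> simp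
      have hbinv : b₂.inv = (biprod.braiding (F₂.obj (L1.obj A₁)) (F₂.obj (L2.obj A₂))).inv
          ≫ (F₂.mapBiprod (L1.obj A₁) (L2.obj A₂)).inv := rfl
      show biprod.inl ≫ b₂.inv ≫ F₂.map ρ = F₂.map (biprod.inr ≫ ρ)
      rw [hbinv, F₂.map_comp, ← Category.assoc, ← Category.assoc, hbr,
        Functor.mapBiprod_inv, biprod.inr_desc]
    exact (congrArg (fun g => IsIso g) heq).mp this
  -- the isomorphisms f1 and f2
  haveI : IsIso (adj1.unit.app A₁ ≫ F₁.map p₁) := by infer_instance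
  haveI : IsIso (adj2.unit.app A₂ ≫ F₂.map p₂) := by infer_instance
  refine ⟨A, (asIso (adj1.unit.app A₁ ≫ F₁.map p₁)).symm,
    (asIso (adj2.unit.app A₂ ≫ F₂.map p₂)).symm, ?_⟩
  -- the transposes of φ₁ and φ₂
  have hA1 : adjW.homEquiv _ _ φ₁
      = R₁.map (adj1.unit.app A₁) ≫ eqToHom (Functor.congr_obj hc₁ (L1.obj A₁)) := by
    have := adj_aux adjA₁ adj1 adjW hc₁ n₁
    dsimp [φ₁, κ₁, adjC₁]
    rw [this]
    have : adjA₁.homEquiv _ _ n₁ = 𝟙 (R₁.obj A₁) := by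
      dsimp [n₁]
      rw [Adjunction.homEquiv_unit]
      simp
    rw [this, Category.id_comp]
  have hA2 : adjW.homEquiv _ _ φ₂
      = -(f21.hom ≫ R₂.map (adj2.unit.app A₂)
          ≫ eqToHom (Functor.congr_obj hc₂ (L2.obj A₂))) := by
    dsimp only [φ₂]
    rw [Adjunction.homEquiv_naturality_left]
    have := adj_aux adjA₂ adj2 adjW hc₂ n₂
    dsimp [κ₂, adjC₂]
    rw [this]
    have : adjA₂.homEquiv _ _ n₂ = -(𝟙 (R₂.obj A₂)) := by
      dsimp [n₂]
      rw [Adjunction.homEquiv_unit, R₂.map_neg]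
      simp
    rw [this]
    simp [Preadditive.neg_comp, Preadditive.comp_neg]
  -- the zero relation from the triangle
  have hzero : φ₁ ≫ p₁ + φ₂ ≫ p₂ = 0 := by
    have h0 : φ ≫ ρ = 0 := comp_distTriang_mor_zero₁₂ _ hΔ
    have h1 : φ ≫ ρ = φ₁ ≫ p₁ + φ₂ ≫ p₂ := by
      show biprod.lift φ₁ φ₂ ≫ ρ = φ₁ ≫ (biprod.inl ≫ ρ) + φ₂ ≫ (biprod.inr ≫ ρ)
      rw [biprod.lift_eq, Preadditive.add_comp]
      simp only [Category.assoc]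
    rw [← h1, h0]
  have hG0 : adjW.homEquiv _ _ (φ₁ ≫ p₁) + adjW.homEquiv _ _ (φ₂ ≫ p₂) = 0 := by
    rw [Adjunction.homEquiv_unit, Adjunction.homEquiv_unit, ← Preadditive.comp_add,
      ← RW.map_add, hzero]
    simp
  rw [adjW.homEquiv_naturality_right φ₁ p₁, adjW.homEquiv_naturality_right φ₂ p₂,
    hA1, hA2] at hG0
  have hG : R₁.map (adj1.unit.app A₁) ≫ eqToHom (Functor.congr_obj hc₁ (L1.obj A₁))
        ≫ RW.map p₁
      = f21.hom ≫ R₂.map (adj2.unit.app A₂)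
        ≫ eqToHom (Functor.congr_obj hc₂ (L2.obj A₂)) ≫ RW.map p₂ := by
    have := hG0
    rw [Preadditive.neg_comp] at this
    rw [add_neg_eq_zero] at this
    simpa using this
  -- the key identity (★)
  have hstar : R₁.map (adj1.unit.app A₁ ≫ F₁.map p₁) ≫ eqToHom (Functor.congr_obj hc₁ A)
      = f21.hom ≫ R₂.map (adj2.unit.app A₂ ≫ F₂.map p₂)
          ≫ eqToHom (Functor.congr_obj hc₂ A) := by
    rw [R₁.map_comp, R₂.map_comp]
    have e₁ : R₁.map (F₁.map p₁) ≫ eqToHom (Functor.congr_obj hc₁ A)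
        = eqToHom (Functor.congr_obj hc₁ (L1.obj A₁)) ≫ RW.map p₁ := by
      have := Functor.congr_hom hc₁ p₁
      dsimp [Functor.comp_map] at this
      rw [this]
      simp
    have e₂ : R₂.map (F₂.map p₂) ≫ eqToHom (Functor.congr_obj hc₂ A)
        = eqToHom (Functor.congr_obj hc₂ (L2.obj A₂)) ≫ RW.map p₂ := by
      have := Functor.congr_hom hc₂ p₂
      dsimp [Functor.comp_map] at this
      rw [this]
      simp
    rw [Category.assoc, e₁, Category.assoc, e₂, ← Category.assoc, ← Category.assoc]
    rw [Category.assoc (R₁.map _), Category.assoc (f21.hom)]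
    exact hG
  -- conclude
  simp only [Iso.symm_hom, asIso_inv]
  rw [← cancel_epi (R₁.map (adj1.unit.app A₁ ≫ F₁.map p₁) ≫
      eqToHom (Functor.congr_obj hc₁ A))]
  conv_rhs => rw [hstar]
  simp only [Category.assoc, eqToHom_trans_assoc, eqToHom_refl, Category.id_comp]
  rw [← R₁.map_comp_assoc, IsIso.hom_inv_id, R₁.map_id, Category.id_comp,
    ← R₂.map_comp, IsIso.hom_inv_id, R₂.map_id, Category.comp_id]

end Glue

/-- Let `T` be a prestack of triangulated categories on a space `X`
(modelled as a functor `(Opens X)ᵒᵖ ⥤ Cat` with triangulated values and exact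
restrictions), such that each restriction functor admits a fully faithful left adjoint
`L` and these adjoints satisfy base change.  Then objects given on `U₁` and `U₂`
together with an isomorphism on `U₁ ⊓ U₂` glue to an object on `U₁ ⊔ U₂`, compatibly
with the given isomorphism. -/
theorem stmt_8 {X : Type u} [TopologicalSpace X]
    (T : (Opens X)ᵒᵖ ⥤ Cat.{v, v})
    [∀ U : (Opens X)ᵒᵖ, HasZeroObject (T.obj U)]
    [∀ U : (Opens X)ᵒᵖ, Preadditive (T.obj U)]
    [∀ U : (Opens X)ᵒᵖ, HasShift (T.obj U) ℤ]
    [∀ (U : (Opens X)ᵒᵖ) (n : ℤ), (shiftFunctor (T.obj U) n).Additive]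
    [∀ U : (Opens X)ᵒᵖ, Pretriangulated (T.obj U)]
    [∀ (V U : (Opens X)ᵒᵖ) (f : V ⟶ U), (T.map f).toFunctor.CommShift ℤ]
    [∀ (V U : (Opens X)ᵒᵖ) (f : V ⟶ U), (T.map f).toFunctor.IsTriangulated]
    -- (1) fully faithful left adjoints to the restriction functors
    (L : ∀ {V U : Opens X}, V ≤ U → (T.obj (op V) ⟶ T.obj (op U)))
    (adj : ∀ {V U : Opens X} (h : V ≤ U), (L h).toFunctor ⊣ (T.map (homOfLE h).op).toFunctor)
    (hfull : ∀ {V U : Opens X} (h : V ≤ U), (L h).toFunctor.Full)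
    (hfaithful : ∀ {V U : Opens X} (h : V ≤ U), (L h).toFunctor.Faithful)
    -- (2) base change
    (hbc : ∀ {U₁ U₂ V : Opens X} (h1 : U₁ ≤ V) (h2 : U₂ ≤ V),
      Nonempty (((T.map (homOfLE (inf_le_left : U₁ ⊓ U₂ ≤ U₁)).op).toFunctor ⋙
          (L (inf_le_right : U₁ ⊓ U₂ ≤ U₂)).toFunctor) ≅ ((L h1).toFunctor ⋙ (T.map (homOfLE h2).op).toFunctor)))
    -- the gluing data
    (U₁ U₂ : Opens X) (A₁ : T.obj (op U₁)) (A₂ : T.obj (op U₂))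
    (f21 : (T.map (homOfLE (inf_le_left : U₁ ⊓ U₂ ≤ U₁)).op).toFunctor.obj A₁ ≅
           (T.map (homOfLE (inf_le_right : U₁ ⊓ U₂ ≤ U₂)).op).toFunctor.obj A₂) :
    ∃ (A : T.obj (op (U₁ ⊔ U₂)))
      (f1 : (T.map (homOfLE (le_sup_left : U₁ ≤ U₁ ⊔ U₂)).op).toFunctor.obj A ≅ A₁)
      (f2 : (T.map (homOfLE (le_sup_right : U₂ ≤ U₁ ⊔ U₂)).op).toFunctor.obj A ≅ A₂),
      eqToIso (show
          (T.map (homOfLE (le_trans inf_le_left le_sup_left : U₁ ⊓ U₂ ≤ U₁ ⊔ U₂)).op).toFunctor.obj A =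
          (T.map (homOfLE (inf_le_left : U₁ ⊓ U₂ ≤ U₁)).op).toFunctor.obj
            ((T.map (homOfLE (le_sup_left : U₁ ≤ U₁ ⊔ U₂)).op).toFunctor.obj A) by
            rw [show (homOfLE (le_trans inf_le_left le_sup_left : U₁ ⊓ U₂ ≤ U₁ ⊔ U₂)).op =
              (homOfLE (le_sup_left : U₁ ≤ U₁ ⊔ U₂)).op ≫
                (homOfLE (inf_le_left : U₁ ⊓ U₂ ≤ U₁)).op from rfl, T.map_comp]; rfl)
        ≪≫ (T.map (homOfLE (inf_le_left : U₁ ⊓ U₂ ≤ U₁)).op).toFunctor.mapIso f1 ≪≫ f21 =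
      eqToIso (show
          (T.map (homOfLE (le_trans inf_le_left le_sup_left : U₁ ⊓ U₂ ≤ U₁ ⊔ U₂)).op).toFunctor.obj A =
          (T.map (homOfLE (inf_le_right : U₁ ⊓ U₂ ≤ U₂)).op).toFunctor.obj
            ((T.map (homOfLE (le_sup_right : U₂ ≤ U₁ ⊔ U₂)).op).toFunctor.obj A) by
            rw [show (homOfLE (le_trans inf_le_left le_sup_left : U₁ ⊓ U₂ ≤ U₁ ⊔ U₂)).op =
              (homOfLE (le_sup_right : U₂ ≤ U₁ ⊔ U₂)).op ≫
                (homOfLE (inf_le_right : U₁ ⊓ U₂ ≤ U₂)).op from rfl, T.map_comp]; rfl)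
        ≪≫ (T.map (homOfLE (inf_le_right : U₁ ⊓ U₂ ≤ U₂)).op).toFunctor.mapIso f2 := by
  classical
  haveI := hfull (le_sup_left : U₁ ≤ U₁ ⊔ U₂)
  haveI := hfaithful (le_sup_left : U₁ ≤ U₁ ⊔ U₂)
  haveI := hfull (le_sup_right : U₂ ≤ U₁ ⊔ U₂)
  haveI := hfaithful (le_sup_right : U₂ ≤ U₁ ⊔ U₂)
  haveI := hfull (inf_le_left : U₁ ⊓ U₂ ≤ U₁)
  haveI := hfaithful (inf_le_left : U₁ ⊓ U₂ ≤ U₁)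
  haveI := hfull (inf_le_right : U₁ ⊓ U₂ ≤ U₂)
  haveI := hfaithful (inf_le_right : U₁ ⊓ U₂ ≤ U₂)
  have hsub : ∀ {a b : (Opens X)ᵒᵖ} (f g : a ⟶ b), f = g := by
    intro a b f g
    exact Quiver.Hom.unop_inj (Subsingleton.elim _ _)
  -- the functor-level composition identities
  have hc₁ : (T.map (homOfLE (le_sup_left : U₁ ≤ U₁ ⊔ U₂)).op).toFunctor ⋙
      (T.map (homOfLE (inf_le_left : U₁ ⊓ U₂ ≤ U₁)).op).toFunctor
      = (T.map (homOfLE (le_trans inf_le_left le_sup_left : U₁ ⊓ U₂ ≤ U₁ ⊔ U₂)).op).toFunctor := by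
    rw [← Cat.comp_eq_comp, ← T.map_comp]
    exact congrArg (fun g => (T.map g).toFunctor) (hsub _ _)
  have hc₂ : (T.map (homOfLE (le_sup_right : U₂ ≤ U₁ ⊔ U₂)).op).toFunctor ⋙
      (T.map (homOfLE (inf_le_right : U₁ ⊓ U₂ ≤ U₂)).op).toFunctor
      = (T.map (homOfLE (le_trans inf_le_left le_sup_left : U₁ ⊓ U₂ ≤ U₁ ⊔ U₂)).op).toFunctor := by
    rw [← Cat.comp_eq_comp, ← T.map_comp]
    exact congrArg (fun g => (T.map g).toFunctor) (hsub _ _)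
  -- the isomorphism transfers coming from base change
  have hI1 : ∀ {P Q : T.obj (op U₁)} (f : P ⟶ Q),
      IsIso (((T.map (homOfLE (inf_le_left : U₁ ⊓ U₂ ≤ U₁)).op).toFunctor).map f) →
      IsIso (((T.map (homOfLE (le_sup_right : U₂ ≤ U₁ ⊔ U₂)).op).toFunctor).map
        (((L (le_sup_left : U₁ ≤ U₁ ⊔ U₂)).toFunctor).map f)) := by
    intro P Q f hf
    obtain ⟨e⟩ := hbc (le_sup_left : U₁ ≤ U₁ ⊔ U₂) (le_sup_right : U₂ ≤ U₁ ⊔ U₂)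
    haveI := hf
    have h0 : IsIso (((T.map (homOfLE (inf_le_left : U₁ ⊓ U₂ ≤ U₁)).op).toFunctor ⋙
        (L (inf_le_right : U₁ ⊓ U₂ ≤ U₂)).toFunctor).map f) := by
      dsimp only [Functor.comp_map]
      infer_instance
    exact isIso_map_of_natIso e f h0
  have hI2 : ∀ {P Q : T.obj (op U₂)} (f : P ⟶ Q),
      IsIso (((T.map (homOfLE (inf_le_right : U₁ ⊓ U₂ ≤ U₂)).op).toFunctor).map f) →
      IsIso (((T.map (homOfLE (le_sup_left : U₁ ≤ U₁ ⊔ U₂)).op).toFunctor).map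
        (((L (le_sup_right : U₂ ≤ U₁ ⊔ U₂)).toFunctor).map f)) := by
    intro P Q f hf
    obtain ⟨e⟩ := hbc (le_sup_right : U₂ ≤ U₁ ⊔ U₂) (le_sup_left : U₁ ≤ U₁ ⊔ U₂)
    have hop : op (U₁ ⊓ U₂) = op (U₂ ⊓ U₁) := congrArg op (inf_comm U₁ U₂)
    have hf' : IsIso (((T.map (homOfLE (inf_le_left : U₂ ⊓ U₁ ≤ U₂)).op).toFunctor).map f) := by
      haveI := hf
      have hcmp : (homOfLE (inf_le_left : U₂ ⊓ U₁ ≤ U₂)).op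
          = (homOfLE (inf_le_right : U₁ ⊓ U₂ ≤ U₂)).op ≫
            (homOfLE (le_inf inf_le_right inf_le_left : U₂ ⊓ U₁ ≤ U₁ ⊓ U₂)).op :=
        hsub _ _
      rw [hcmp, T.map_comp, Cat.comp_eq_comp]
      dsimp only [Functor.comp_map]
      infer_instance
    haveI := hf'
    have h0 : IsIso (((T.map (homOfLE (inf_le_left : U₂ ⊓ U₁ ≤ U₂)).op).toFunctor ⋙
        (L (inf_le_right : U₂ ⊓ U₁ ≤ U₁)).toFunctor).map f) := by
      dsimp only [Functor.comp_map]
      infer_instance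
    exact isIso_map_of_natIso e f h0
  obtain ⟨A, f1, f2, heq⟩ := glue_main
    ((T.map (homOfLE (le_sup_left : U₁ ≤ U₁ ⊔ U₂)).op).toFunctor)
    ((T.map (homOfLE (le_sup_right : U₂ ≤ U₁ ⊔ U₂)).op).toFunctor)
    ((T.map (homOfLE (le_trans inf_le_left le_sup_left : U₁ ⊓ U₂ ≤ U₁ ⊔ U₂)).op).toFunctor)
    ((T.map (homOfLE (inf_le_left : U₁ ⊓ U₂ ≤ U₁)).op).toFunctor)
    ((T.map (homOfLE (inf_le_right : U₁ ⊓ U₂ ≤ U₂)).op).toFunctor)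
    ((L (le_sup_left : U₁ ≤ U₁ ⊔ U₂)).toFunctor) ((L (le_sup_right : U₂ ≤ U₁ ⊔ U₂)).toFunctor)
    ((L (le_trans inf_le_left le_sup_left : U₁ ⊓ U₂ ≤ U₁ ⊔ U₂)).toFunctor)
    ((L (inf_le_left : U₁ ⊓ U₂ ≤ U₁)).toFunctor) ((L (inf_le_right : U₁ ⊓ U₂ ≤ U₂)).toFunctor)
    (adj le_sup_left) (adj le_sup_right) (adj (le_trans inf_le_left le_sup_left))
    (adj inf_le_left) (adj inf_le_right)
    hc₁ hc₂ hI1 hI2 A₁ A₂ f21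
  refine ⟨A, f1, f2, ?_⟩
  apply Iso.ext
  simp only [Iso.trans_hom, eqToIso.hom, Functor.mapIso_hom, Category.assoc]
  exact heq
end

section
/- Let δ ⊆ ℝⁿ be a closed cone (a closed set stable under multiplication by nonnegative reals). Then there exists a decreasing sequence (δ_k)_{k≥1} of closed cones with ⋂_{k≥1} δ_k = δ such that each δ_k is a finite union of closed convex salient cones (closed convex cones γ with γ ∩ (−γ) ⊆ {0}). -/
open Metric Set Filter

namespace Stmt12Aux

variable {n : ℕ}

/-- Closed convex salient cone of "angular width" `arccos c` around direction `x`. -/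
def K (c : ℝ) (x : EuclideanSpace ℝ (Fin n)) : Set (EuclideanSpace ℝ (Fin n)) :=
  {z | c * ‖z‖ ≤ inner ℝ x z}

lemma zero_mem_K (c : ℝ) (x : EuclideanSpace ℝ (Fin n)) : 0 ∈ K c x := by
  simp [K]

lemma isClosed_K (c : ℝ) (x : EuclideanSpace ℝ (Fin n)) : IsClosed (K c x) :=
  isClosed_le (continuous_const.mul continuous_norm) (continuous_const.inner continuous_id)

lemma convex_K {c : ℝ} (hc : 0 ≤ c) (x : EuclideanSpace ℝ (Fin n)) : Convex ℝ (K c x) := by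
  intro z hz w hw a b ha hb hab
  simp only [K, mem_setOf_eq] at hz hw ⊢
  have h1 : ‖a • z + b • w‖ ≤ a * ‖z‖ + b * ‖w‖ := by
    calc ‖a • z + b • w‖ ≤ ‖a • z‖ + ‖b • w‖ := norm_add_le _ _
    _ = a * ‖z‖ + b * ‖w‖ := by
        rw [norm_smul, norm_smul, Real.norm_of_nonneg ha, Real.norm_of_nonneg hb]
  have h2 : (inner ℝ x (a • z + b • w) : ℝ) = a * inner ℝ x z + b * inner ℝ x w := by
    rw [inner_add_right, real_inner_smul_right, real_inner_smul_right]
  rw [h2]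
  nlinarith [mul_le_mul_of_nonneg_left hz ha, mul_le_mul_of_nonneg_left hw hb]

lemma cone_K {c : ℝ} (x : EuclideanSpace ℝ (Fin n)) {r : ℝ} (hr : 0 ≤ r) {z}
    (hz : z ∈ K c x) : r • z ∈ K c x := by
  simp only [K, mem_setOf_eq] at hz ⊢
  rw [norm_smul, Real.norm_of_nonneg hr, real_inner_smul_right]
  nlinarith

lemma salient_K {c : ℝ} (hc : 0 < c) (x : EuclideanSpace ℝ (Fin n)) :
    K c x ∩ (-(K c x)) ⊆ {0} := by
  rintro z ⟨hz, hz'⟩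
  rw [Set.mem_neg] at hz'
  simp only [K, mem_setOf_eq] at hz hz'
  rw [norm_neg, inner_neg_right] at hz'
  have : ‖z‖ ≤ 0 := by nlinarith
  simpa using norm_le_zero_iff.mp this

lemma K_mono {c s : ℝ} {x x' : EuclideanSpace ℝ (Fin n)} (hxx : ‖x' - x‖ ≤ s) :
    K (c + s) x ⊆ K c x' := by
  intro z hz
  simp only [K, mem_setOf_eq] at hz ⊢
  have h1 : |(inner ℝ (x' - x) z : ℝ)| ≤ ‖x' - x‖ * ‖z‖ := abs_real_inner_le_norm _ _
  have h2 : (inner ℝ (x' - x) z : ℝ) = inner ℝ x' z - inner ℝ x z := inner_sub_left _ _ _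
  have h3 : ‖x' - x‖ * ‖z‖ ≤ s * ‖z‖ := mul_le_mul_of_nonneg_right hxx (norm_nonneg _)
  have := neg_abs_le (inner ℝ (x' - x) z : ℝ)
  nlinarith

lemma inner_ge_of_close {x u : EuclideanSpace ℝ (Fin n)} (hx : ‖x‖ = 1) (hu : ‖u‖ = 1)
    {s : ℝ} (h : ‖x - u‖ ≤ s) : (1 : ℝ) - s ^ 2 / 2 ≤ inner ℝ x u := by
  have h1 : ‖x - u‖ ^ 2 = ‖x‖ ^ 2 - 2 * inner ℝ x u + ‖u‖ ^ 2 := norm_sub_sq_real x u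
  have h2 : ‖x - u‖ ^ 2 ≤ s ^ 2 := by nlinarith [norm_nonneg (x - u)]
  nlinarith [hx, hu]

end Stmt12Aux

open Stmt12Aux

/-- Every closed cone `δ ⊆ ℝⁿ` is the intersection of a decreasing sequence
of closed cones, each of which is a finite union of closed convex salient cones. -/
theorem stmt_12 {n : ℕ} (δ : Set (EuclideanSpace ℝ (Fin n)))
    (hδclosed : IsClosed δ)
    (hδcone : ∀ r : ℝ, 0 ≤ r → ∀ x ∈ δ, r • x ∈ δ) :
    ∃ δseq : ℕ → Set (EuclideanSpace ℝ (Fin n)),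
      (∀ k, δseq (k + 1) ⊆ δseq k) ∧
      (⋂ k, δseq k) = δ ∧
      (∀ k, IsClosed (δseq k) ∧
        (∀ r : ℝ, 0 ≤ r → ∀ x ∈ δseq k, r • x ∈ δseq k) ∧
        ∃ (m : ℕ) (γ : Fin m → Set (EuclideanSpace ℝ (Fin n))),
          δseq k = ⋃ i, γ i ∧
          ∀ i, IsClosed (γ i) ∧ Convex ℝ (γ i) ∧
            (∀ r : ℝ, 0 ≤ r → ∀ x ∈ γ i, r • x ∈ γ i) ∧
            γ i ∩ (-γ i) ⊆ {0}) := by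
  classical
  rcases Set.eq_empty_or_nonempty δ with hemp | ⟨y0, hy0⟩
  · refine ⟨fun _ => ∅, fun k => subset_rfl, by rw [hemp]; exact Set.iInter_const ∅, fun k =>
      ⟨isClosed_empty, by simp, 0, fun i => i.elim0, by simp, fun i => i.elim0⟩⟩
  have h0δ : (0 : EuclideanSpace ℝ (Fin n)) ∈ δ := by
    simpa using hδcone 0 le_rfl y0 hy0
  set S : Set (EuclideanSpace ℝ (Fin n)) := δ ∩ sphere 0 1 with hSdef
  have hScompact : IsCompact S := (isCompact_sphere 0 1).inter_left hδclosed
  have hSclosed : IsClosed S := hδclosed.inter isClosed_sphere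
  set c : ℕ → ℝ := fun k => 1 - (2:ℝ)⁻¹ ^ (k+1) with hcdef
  set s : ℕ → ℝ := fun k => (2:ℝ)⁻¹ ^ (k+2) with hsdef
  have h2 : (0:ℝ) < 2⁻¹ := by norm_num
  have hspos : ∀ k, 0 < s k := fun k => pow_pos h2 _
  have hcpos : ∀ k, 0 < c k := by
    intro k
    have h1 : (2:ℝ)⁻¹ ^ (k+1) ≤ 2⁻¹ ^ 1 :=
      pow_le_pow_of_le_one (by norm_num) (by norm_num) (by omega)
    have : c k = 1 - (2:ℝ)⁻¹ ^ (k+1) := rfl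
    rw [this]; simp only [pow_one] at h1; linarith
  have hstep : ∀ k, c (k+1) = c k + s k := by
    intro k
    have hc1 : c (k+1) = 1 - (2:ℝ)⁻¹ ^ (k+2) := rfl
    have hc2 : c k = 1 - (2:ℝ)⁻¹ ^ (k+1) := rfl
    have hs2 : s k = (2:ℝ)⁻¹ ^ (k+2) := rfl
    rw [hc1, hc2, hs2, show k+2 = (k+1)+1 from rfl, pow_succ]
    ring
  have hcov : ∀ k, c k ≤ 1 - (s k)^2 / 2 := by
    intro k
    have h1 : (s k)^2 / 2 ≤ (2:ℝ)⁻¹ ^ (k+1) := by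
      have hs2 : s k = (2:ℝ)⁻¹ ^ (k+2) := rfl
      have : (s k)^2 / 2 = (2:ℝ)⁻¹ ^ (2*k+5) := by
        rw [hs2, ← pow_mul, show (k+2)*2 = 2*k+4 by ring, show 2*k+5 = (2*k+4)+1 from rfl,
          pow_succ]
        ring
      rw [this]
      exact pow_le_pow_of_le_one (by norm_num) (by norm_num) (by omega)
    have hc2 : c k = 1 - (2:ℝ)⁻¹ ^ (k+1) := rfl
    rw [hc2]; linarith
  have hcover : ∀ k, ∃ F : Finset (EuclideanSpace ℝ (Fin n)),
      (∀ x ∈ F, x ∈ S) ∧ S ⊆ ⋃ x ∈ F, ball x (s k) := fun k =>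
    hScompact.elim_nhds_subcover (fun x => ball x (s k)) (fun x _ => ball_mem_nhds x (hspos k))
  choose F hFS hFcov using hcover
  refine ⟨fun k => {0} ∪ ⋃ x ∈ F k, K (c k) x, ?_, ?_, ?_⟩
  · -- decreasing
    intro k z hz
    rcases hz with hz | hz
    · exact Or.inl hz
    · rw [mem_iUnion₂] at hz
      obtain ⟨x, hxF, hzx⟩ := hz
      have hxS : x ∈ S := hFS _ x hxF
      obtain ⟨x', hx'⟩ := mem_iUnion₂.mp (hFcov k hxS)
      obtain ⟨hx'F, hxball⟩ := hx'
      refine Or.inr (mem_iUnion₂.mpr ⟨x', hx'F, ?_⟩)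
      have hd : ‖x' - x‖ ≤ s k := by
        rw [← dist_eq_norm, dist_comm]
        exact le_of_lt (mem_ball.mp hxball)
      exact K_mono hd (by rwa [← hstep k])
  · -- intersection
    apply Set.Subset.antisymm
    · intro z hz
      rw [mem_iInter] at hz
      by_cases hz0 : z = 0
      · rw [hz0]; exact h0δ
      · have hzn : ‖z‖ ≠ 0 := norm_ne_zero_iff.mpr hz0
        set u : EuclideanSpace ℝ (Fin n) := ‖z‖⁻¹ • z with hudef
        have hun : ‖u‖ = 1 := by
          rw [hudef, norm_smul, Real.norm_of_nonneg (inv_nonneg.mpr (norm_nonneg z)),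
            inv_mul_cancel₀ hzn]
        have hx : ∀ k, ∃ x ∈ F k, z ∈ K (c k) x := by
          intro k
          rcases hz k with h | h
          · exact absurd h hz0
          · obtain ⟨x, hxF, hxK⟩ := mem_iUnion₂.mp h
            exact ⟨x, hxF, hxK⟩
        choose x hxF hxK using hx
        have hdist : ∀ k, dist (x k) u ^ 2 ≤ (2:ℝ)⁻¹ ^ k := by
          intro k
          have hxS : x k ∈ S := hFS _ _ (hxF k)
          have hxn : ‖x k‖ = 1 := by
            have := hxS.2; rwa [mem_sphere, dist_zero_right] at this
          have hiz : c k * ‖z‖ ≤ inner ℝ (x k) z := hxK k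
          have hiu : c k ≤ (inner ℝ (x k) u : ℝ) := by
            rw [hudef, real_inner_smul_right]
            have hpos : (0:ℝ) < ‖z‖⁻¹ := inv_pos.mpr ((norm_nonneg z).lt_of_ne' hzn)
            have := mul_le_mul_of_nonneg_left hiz hpos.le
            rwa [← mul_assoc, mul_comm (‖z‖⁻¹) (c k), mul_assoc, inv_mul_cancel₀ hzn,
              mul_one] at this
          have hsq : ‖x k - u‖ ^ 2 = ‖x k‖ ^ 2 - 2 * inner ℝ (x k) u + ‖u‖ ^ 2 :=
            norm_sub_sq_real _ _
          have h2c : 2 - 2 * c k = (2:ℝ)⁻¹ ^ k := by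
            have hc2 : c k = 1 - (2:ℝ)⁻¹ ^ (k+1) := rfl
            rw [hc2, pow_succ]; ring
          rw [dist_eq_norm, hsq, hxn, hun, one_pow, ← h2c]
          linarith [hiu]
        have hsq0 : Tendsto (fun k : ℕ => Real.sqrt ((2:ℝ)⁻¹ ^ k)) atTop (nhds 0) :=
          (Real.continuous_sqrt.tendsto' 0 0 Real.sqrt_zero).comp
            (tendsto_pow_atTop_nhds_zero_of_lt_one (r := (2:ℝ)⁻¹) (by norm_num) (by norm_num))
        have htend : Tendsto x atTop (nhds u) := by
          rw [tendsto_iff_dist_tendsto_zero]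
          refine squeeze_zero (fun k => dist_nonneg) (fun k => ?_) hsq0
          calc dist (x k) u = Real.sqrt (dist (x k) u ^ 2) := by
                rw [Real.sqrt_sq dist_nonneg]
            _ ≤ Real.sqrt ((2:ℝ)⁻¹ ^ k) := Real.sqrt_le_sqrt (hdist k)
        have huS : u ∈ S := hSclosed.mem_of_tendsto htend
          (Filter.Eventually.of_forall fun k => hFS _ _ (hxF k))
        have : ‖z‖ • u ∈ δ := hδcone _ (norm_nonneg z) u huS.1
        rwa [hudef, smul_smul, mul_inv_cancel₀ hzn, one_smul] at this
    · apply subset_iInter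
      intro k y hy
      by_cases hy0 : y = 0
      · exact Or.inl (by simp [hy0])
      · have hyn : ‖y‖ ≠ 0 := norm_ne_zero_iff.mpr hy0
        set u : EuclideanSpace ℝ (Fin n) := ‖y‖⁻¹ • y with hudef
        have hun : ‖u‖ = 1 := by
          rw [hudef, norm_smul, Real.norm_of_nonneg (inv_nonneg.mpr (norm_nonneg y)),
            inv_mul_cancel₀ hyn]
        have huS : u ∈ S := ⟨hδcone _ (inv_nonneg.mpr (norm_nonneg y)) y hy,
          by rw [mem_sphere, dist_zero_right]; exact hun⟩
        obtain ⟨x, hxF, hxball⟩ := mem_iUnion₂.mp (hFcov k huS)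
        have hxS := hFS _ _ hxF
        have hxn : ‖x‖ = 1 := by
          have := hxS.2; rwa [mem_sphere, dist_zero_right] at this
        have hd : ‖x - u‖ ≤ s k := by
          rw [← dist_eq_norm, dist_comm]
          exact le_of_lt (mem_ball.mp hxball)
        have hiu : (1:ℝ) - (s k)^2/2 ≤ inner ℝ x u := inner_ge_of_close hxn hun hd
        refine Or.inr (mem_iUnion₂.mpr ⟨x, hxF, ?_⟩)
        show c k * ‖y‖ ≤ (inner ℝ x y : ℝ)
        have hyu : y = ‖y‖ • u := by
          rw [hudef, smul_smul, mul_inv_cancel₀ hyn, one_smul]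
        rw [hyu, real_inner_smul_right, norm_smul, Real.norm_of_nonneg (norm_nonneg y), hun,
          mul_one]
        have := hcov k
        nlinarith [norm_nonneg y, mul_le_mul_of_nonneg_left (le_trans (hcov k) hiu) (norm_nonneg y)]
  · -- each stage
    intro k
    refine ⟨?_, ?_, ?_⟩
    · exact isClosed_singleton.union
        ((F k).finite_toSet.isClosed_biUnion fun x _ => isClosed_K _ _)
    · rintro r hr z (hz | hz)
      · exact Or.inl (by simp_all)
      · obtain ⟨x, hxF, hxK⟩ := mem_iUnion₂.mp hz
        exact Or.inr (mem_iUnion₂.mpr ⟨x, hxF, cone_K x hr hxK⟩)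
    · set e := (F k).equivFin with hedef
      refine ⟨(F k).card + 1, fun i =>
        if h : (i:ℕ) < (F k).card then K (c k) ((e.symm ⟨i, h⟩ : (F k)) : _) else {0}, ?_, ?_⟩
      · ext z
        simp only [mem_union, mem_iUnion]
        constructor
        · rintro (hz | hz)
          · exact ⟨⟨(F k).card, Nat.lt_succ_self _⟩, by
              rw [dif_neg (lt_irrefl _)]; exact hz⟩
          · obtain ⟨x, hxF, hxK⟩ := hz
            refine ⟨⟨(e ⟨x, hxF⟩ : ℕ), Nat.lt_succ_of_lt (e ⟨x, hxF⟩).2⟩, ?_⟩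
            rw [dif_pos (e ⟨x, hxF⟩).2]
            have : e.symm ⟨(e ⟨x, hxF⟩ : ℕ), (e ⟨x, hxF⟩).2⟩ = ⟨x, hxF⟩ := by
              rw [show (⟨(e ⟨x, hxF⟩ : ℕ), (e ⟨x, hxF⟩).2⟩ : Fin (F k).card) = e ⟨x, hxF⟩
                from Fin.ext rfl, Equiv.symm_apply_apply]
            rw [this]
            exact hxK
        · rintro ⟨i, hi⟩
          by_cases h : (i:ℕ) < (F k).card
          · rw [dif_pos h] at hi
            exact Or.inr ⟨_, (e.symm ⟨i, h⟩).2, hi⟩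
          · rw [dif_neg h] at hi
            exact Or.inl hi
      · intro i
        by_cases h : (i:ℕ) < (F k).card
        · simp only [dif_pos h]
          exact ⟨isClosed_K _ _, convex_K (hcpos k).le _,
            fun r hr x hx => cone_K _ hr hx, salient_K (hcpos k) _⟩
        · simp only [dif_neg h]
          exact ⟨isClosed_singleton, convex_singleton 0,
            fun r hr x hx => by simp_all,
            by intro z hz; exact hz.1⟩
end
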